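/- (Weak consistency of the second-stage slope.) Under assumption (A1) with f ∈ 𝓕 (f increasing with f' continuous and positive at d₀ and f''' bounded near d₀) and γ ∈ (0, 1/2), the slope estimator β̂₁ = (2K n₁^{-γ} n₂)^{-1} Σ_{i=1}^{n₂} (Y''_i − Y'_i) converges in probability to f'(d₀), where Y'_i = f(L) + ε'_i, Y''_i = f(U) + ε''_i, L = d̂^{(1)}_{n₁} − K n₁^{-γ}, U = d̂^{(1)}_{n₁} + K n₁^{-γ}, and d̂^{(1)}_{n₁} − d₀ = O_P(n₁^{-1/3}). -/

import Mathlib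

open Filter MeasureTheory ProbabilityTheory Finset
open scoped Topology

/-- Weak consistency of the second-stage slope estimator: with `f` increasing, three times
continuously differentiable near `d₀` with `f'(d₀) > 0`, a first-stage estimator `d̂` that
is `O_P(n₁^{-1/3})`-consistent for `d₀`, i.i.d. mean-zero variance-`σ²` second-stage errors
independent of the first stage, and sampling points `L = d̂ - K n₁^{-γ}`, `U = d̂ + K n₁^{-γ}`
with `γ ∈ (0, 1/2)`, the slope estimator
`β̂₁ = (2 K n₁^{-γ} n₂)⁻¹ Σᵢ (Y''ᵢ - Y'ᵢ)` converges in probability to `f'(d₀)`. -/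
theorem second_stage_slope_consistency {Ω : Type*} [MeasurableSpace Ω] (P : Measure Ω)
    [IsProbabilityMeasure P] (f : ℝ → ℝ) (d₀ σ p K γ ε₀ : ℝ)
    (hp0 : 0 < p) (hp1 : p < 1) (hK : 0 < K) (hγ0 : 0 < γ) (hγ : γ < 1 / 2)
    (hσ : 0 < σ) (hε₀ : 0 < ε₀)
    (hf_mono : Monotone f)
    (hf_smooth : ContDiffOn ℝ 3 f (Metric.ball d₀ ε₀))
    (hf_deriv_pos : 0 < deriv f d₀)
    (d : ℕ → Ω → ℝ) (hd_meas : ∀ n, Measurable (d n))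
    (hd_tight : ∀ ε : ℝ, 0 < ε → ∃ M : ℝ, 0 < M ∧ ∀ᶠ n : ℕ in atTop,
      P {ω | M < (⌊(n : ℝ) * p⌋₊ : ℝ) ^ ((1 : ℝ) / 3) * |d n ω - d₀|}
        ≤ ENNReal.ofReal ε)
    (μ : Measure ℝ) [IsProbabilityMeasure μ]
    (hmean : ∫ x, x ∂μ = 0) (hvar : ∫ x, x ^ 2 ∂μ = σ ^ 2)
    (ε' ε'' : ℕ → Ω → ℝ)
    (hmeas' : ∀ i, Measurable (ε' i)) (hmeas'' : ∀ i, Measurable (ε'' i))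
    (herr_indep : iIndepFun
      (Sum.elim ε' ε'') P)
    (hdist' : ∀ i, Measure.map (ε' i) P = μ) (hdist'' : ∀ i, Measure.map (ε'' i) P = μ)
    (hstage_indep : Indep (⨆ n, MeasurableSpace.comap (d n) inferInstance)
      (⨆ i : ℕ ⊕ ℕ, MeasurableSpace.comap (Sum.elim ε' ε'' i) inferInstance) P) :
    TendstoInMeasure P
      (fun (n : ℕ) (ω : Ω) =>
        (2 * K * ((⌊(n : ℝ) * p⌋₊ : ℝ) ^ (-γ)) * (⌊(n : ℝ) * (1 - p) / 2⌋₊ : ℝ))⁻¹ *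
          ∑ i ∈ range ⌊(n : ℝ) * (1 - p) / 2⌋₊,
            ((f (d n ω + K * (⌊(n : ℝ) * p⌋₊ : ℝ) ^ (-γ)) + ε'' i ω)
              - (f (d n ω - K * (⌊(n : ℝ) * p⌋₊ : ℝ) ^ (-γ)) + ε' i ω)))
      atTop (fun _ => deriv f d₀) := by
  classical
  rw [tendstoInMeasure_iff_dist]
  intro ε hε
  have hp1' : (0 : ℝ) < 1 - p := by linarith
  -- abbreviations (not occurring in the goal)
  set c : ℕ → ℝ := fun n =>
    (2 * K * ((⌊(n : ℝ) * p⌋₊ : ℝ) ^ (-γ)) * (⌊(n : ℝ) * (1 - p) / 2⌋₊ : ℝ))⁻¹ with hc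
  set S : ℕ → Ω → ℝ := fun n ω =>
    ∑ i ∈ range ⌊(n : ℝ) * (1 - p) / 2⌋₊, (ε'' i ω - ε' i ω) with hS
  -- ### Step 0: continuity of the derivative at d₀, choice of δ
  have hderiv_cont : ContinuousAt (deriv f) d₀ :=
    (hf_smooth.continuousOn_deriv_of_isOpen Metric.isOpen_ball (by norm_num)).continuousAt
      (Metric.isOpen_ball.mem_nhds (Metric.mem_ball_self hε₀))
  obtain ⟨δ₀, hδ₀pos, hδ₀⟩ := Metric.continuousAt_iff.1 hderiv_cont (ε / 4) (by positivity)
  set δ : ℝ := min (δ₀ / 4) (ε₀ / 4) with hδdef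
  have hδpos : 0 < δ := lt_min (by positivity) (by positivity)
  have h2δ₀ : 2 * δ < δ₀ := by
    have := min_le_left (δ₀ / 4) (ε₀ / 4); rw [hδdef]; linarith
  have h2ε₀ : 2 * δ < ε₀ := by
    have := min_le_right (δ₀ / 4) (ε₀ / 4); rw [hδdef]; linarith
  -- ### Step 1: deterministic slope bound
  have hslope : ∀ x h' : ℝ, 0 < h' → h' ≤ δ → |x - d₀| ≤ δ →
      |(2 * h')⁻¹ * (f (x + h') - f (x - h')) - deriv f d₀| ≤ ε / 4 := by
    intro x h' hh' hh'δ hx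
    set g : ℝ → ℝ := fun y => f y - deriv f d₀ * y with hg
    have hdiff : ∀ y ∈ Metric.closedBall d₀ (2 * δ), DifferentiableAt ℝ f y := by
      intro y hy
      have hyball : y ∈ Metric.ball d₀ ε₀ := by
        rw [Metric.mem_closedBall] at hy
        rw [Metric.mem_ball]
        exact lt_of_le_of_lt hy h2ε₀
      exact (hf_smooth.differentiableOn (by norm_num)).differentiableAt
        (Metric.isOpen_ball.mem_nhds hyball)
    have hgdiff : ∀ y ∈ Metric.closedBall d₀ (2 * δ), DifferentiableAt ℝ g y := by
      intro y hy
      exact (hdiff y hy).sub (differentiableAt_id.const_mul _)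
    have hgderiv : ∀ y ∈ Metric.closedBall d₀ (2 * δ), deriv g y = deriv f y - deriv f d₀ := by
      intro y hy
      have hder : HasDerivAt g (deriv f y - deriv f d₀ * 1) y :=
        ((hdiff y hy).hasDerivAt).sub ((hasDerivAt_id y).const_mul (deriv f d₀))
      rw [hder.deriv]
      ring
    have hbound : ∀ y ∈ Metric.closedBall d₀ (2 * δ), ‖deriv g y‖ ≤ ε / 4 := by
      intro y hy
      rw [hgderiv y hy, Real.norm_eq_abs]
      have hyd : dist y d₀ < δ₀ := lt_of_le_of_lt (Metric.mem_closedBall.1 hy) h2δ₀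
      have := hδ₀ hyd
      rw [Real.dist_eq] at this
      exact this.le
    have hxu : x + h' ∈ Metric.closedBall d₀ (2 * δ) := by
      rw [Metric.mem_closedBall, Real.dist_eq]
      have h1 : |x + h' - d₀| ≤ |x - d₀| + |h'| := by
        have : x + h' - d₀ = (x - d₀) + h' := by ring
        rw [this]; exact abs_add_le _ _
      rw [abs_of_pos hh'] at h1
      linarith
    have hxl : x - h' ∈ Metric.closedBall d₀ (2 * δ) := by
      rw [Metric.mem_closedBall, Real.dist_eq]
      have h1 : |x - h' - d₀| ≤ |x - d₀| + |h'| := by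
        have : x - h' - d₀ = (x - d₀) + (-h') := by ring
        rw [this]
        exact le_trans (abs_add_le _ _) (by rw [abs_neg])
      rw [abs_of_pos hh'] at h1
      linarith
    have hmvt := Convex.norm_image_sub_le_of_norm_deriv_le hgdiff hbound
      (convex_closedBall d₀ (2 * δ)) hxl hxu
    have hnorm : ‖x + h' - (x - h')‖ = 2 * h' := by
      rw [Real.norm_eq_abs, show x + h' - (x - h') = 2 * h' by ring,
        abs_of_pos (by linarith)]
    rw [hnorm] at hmvt
    have hgdif : g (x + h') - g (x - h') =
        f (x + h') - f (x - h') - deriv f d₀ * (2 * h') := by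
      rw [hg]; ring
    rw [hgdif, Real.norm_eq_abs] at hmvt
    have h2h : (0 : ℝ) < 2 * h' := by linarith
    have hrw : (2 * h')⁻¹ * (f (x + h') - f (x - h')) - deriv f d₀ =
        (2 * h')⁻¹ * (f (x + h') - f (x - h') - deriv f d₀ * (2 * h')) := by
      field_simp
    rw [hrw, abs_mul, abs_of_pos (inv_pos.2 h2h)]
    calc (2 * h')⁻¹ * |f (x + h') - f (x - h') - deriv f d₀ * (2 * h')|
        ≤ (2 * h')⁻¹ * (ε / 4 * (2 * h')) := by gcongr
    _ = ε / 4 := by field_simp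
  -- ### Step 2: basic limits of the sample sizes
  have hN1top : Tendsto (fun n : ℕ => ⌊(n : ℝ) * p⌋₊) atTop atTop :=
    tendsto_nat_floor_atTop.comp (tendsto_natCast_atTop_atTop.atTop_mul_const hp0)
  have hN1rtop : Tendsto (fun n : ℕ => (⌊(n : ℝ) * p⌋₊ : ℝ)) atTop atTop :=
    tendsto_natCast_atTop_atTop.comp hN1top
  -- ### Step 3: the first-stage term goes to 0 in probability
  have hPd : Tendsto (fun n => P {ω | δ < |d n ω - d₀|}) atTop (𝓝 0) := by
    rw [ENNReal.tendsto_atTop_zero]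
    intro e he
    by_cases hetop : e = ⊤
    · exact ⟨0, fun n _ => hetop ▸ le_top⟩
    have hereal : 0 < e.toReal := ENNReal.toReal_pos he.ne' hetop
    obtain ⟨M, hM, hMev⟩ := hd_tight e.toReal hereal
    have h13 : Tendsto (fun n : ℕ => (⌊(n : ℝ) * p⌋₊ : ℝ) ^ ((1 : ℝ) / 3)) atTop atTop :=
      (tendsto_rpow_atTop (by norm_num)).comp hN1rtop
    have hev2 : ∀ᶠ n : ℕ in atTop, M < (⌊(n : ℝ) * p⌋₊ : ℝ) ^ ((1 : ℝ) / 3) * δ := by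
      filter_upwards [h13.eventually_gt_atTop (M / δ)] with n hn
      calc M = M / δ * δ := by field_simp
      _ < (⌊(n : ℝ) * p⌋₊ : ℝ) ^ ((1 : ℝ) / 3) * δ := by gcongr
    rw [← eventually_atTop]
    filter_upwards [hMev, hev2] with n h1 h2
    refine le_trans (le_trans (measure_mono ?_) h1) (le_of_eq (ENNReal.ofReal_toReal hetop))
    intro ω hω
    simp only [Set.mem_setOf_eq] at *
    calc M < (⌊(n : ℝ) * p⌋₊ : ℝ) ^ ((1 : ℝ) / 3) * δ := h2
    _ ≤ (⌊(n : ℝ) * p⌋₊ : ℝ) ^ ((1 : ℝ) / 3) * |d n ω - d₀| :=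
        mul_le_mul_of_nonneg_left hω.le (Real.rpow_nonneg (Nat.cast_nonneg _) _)
  -- ### Step 4: second moments of the errors
  have hsq : Integrable (fun x : ℝ => x ^ 2) μ := by
    by_contra hcon
    rw [integral_undef hcon] at hvar
    exact absurd hvar.symm (by positivity)
  have hμ2 : MemLp (id : ℝ → ℝ) 2 μ :=
    (memLp_two_iff_integrable_sq aestronglyMeasurable_id).2 hsq
  have hL' : ∀ i, MemLp (ε' i) 2 P := by
    intro i
    have h1 : MemLp (id : ℝ → ℝ) 2 (Measure.map (ε' i) P) := by rw [hdist' i]; exact hμ2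
    exact (memLp_map_measure_iff aestronglyMeasurable_id (hmeas' i).aemeasurable).1 h1
  have hL'' : ∀ i, MemLp (ε'' i) 2 P := by
    intro i
    have h1 : MemLp (id : ℝ → ℝ) 2 (Measure.map (ε'' i) P) := by rw [hdist'' i]; exact hμ2
    exact (memLp_map_measure_iff aestronglyMeasurable_id (hmeas'' i).aemeasurable).1 h1
  have hE' : ∀ i, ∫ ω, ε' i ω ∂P = 0 := by
    intro i
    have h1 : ∫ y, y ∂(Measure.map (ε' i) P) = ∫ ω, ε' i ω ∂P :=
      integral_map (hmeas' i).aemeasurable aestronglyMeasurable_id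
    rw [hdist' i, hmean] at h1
    exact h1.symm
  have hE'' : ∀ i, ∫ ω, ε'' i ω ∂P = 0 := by
    intro i
    have h1 : ∫ y, y ∂(Measure.map (ε'' i) P) = ∫ ω, ε'' i ω ∂P :=
      integral_map (hmeas'' i).aemeasurable aestronglyMeasurable_id
    rw [hdist'' i, hmean] at h1
    exact h1.symm
  have hM2' : ∀ i, ∫ ω, (ε' i ω) ^ 2 ∂P = σ ^ 2 := by
    intro i
    have h1 : ∫ y, y ^ 2 ∂(Measure.map (ε' i) P) = ∫ ω, (ε' i ω) ^ 2 ∂P :=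
      integral_map (hmeas' i).aemeasurable (measurable_id.pow_const 2).aestronglyMeasurable
    rw [hdist' i, hvar] at h1
    exact h1.symm
  have hM2'' : ∀ i, ∫ ω, (ε'' i ω) ^ 2 ∂P = σ ^ 2 := by
    intro i
    have h1 : ∫ y, y ^ 2 ∂(Measure.map (ε'' i) P) = ∫ ω, (ε'' i ω) ^ 2 ∂P :=
      integral_map (hmeas'' i).aemeasurable (measurable_id.pow_const 2).aestronglyMeasurable
    rw [hdist'' i, hvar] at h1
    exact h1.symm
  have hVar' : ∀ i, variance (ε' i) P = σ ^ 2 := by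
    intro i
    rw [variance_eq_sub (hL' i)]
    simp only [Pi.pow_apply]
    rw [hM2' i, hE' i]
    ring
  have hVar'' : ∀ i, variance (ε'' i) P = σ ^ 2 := by
    intro i
    rw [variance_eq_sub (hL'' i)]
    simp only [Pi.pow_apply]
    rw [hM2'' i, hE'' i]
    ring
  -- ### Step 5: the combined error family
  set W : ℕ ⊕ ℕ → Ω → ℝ := Sum.elim (fun i ω => -(ε' i ω)) ε'' with hW
  have hWmem : ∀ j, MemLp (W j) 2 P := by
    intro j
    cases j with
    | inl i => exact (hL' i).neg
    | inr i => exact hL'' i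
  have hWvar : ∀ j, variance (W j) P = σ ^ 2 := by
    intro j
    cases j with
    | inl i =>
        have h1 : W (Sum.inl i) = (-1 : ℝ) • ε' i := by
          funext ω; simp [hW]
        rw [h1, variance_smul, hVar' i]
        norm_num
    | inr i => exact hVar'' i
  have hWindep : ∀ a b, a ≠ b → IndepFun (W a) (W b) P := by
    intro a b hab
    have hElimMeas : ∀ j, Measurable (Sum.elim ε' ε'' j) := by
      intro j
      cases j with
      | inl i => exact hmeas' i
      | inr i => exact hmeas'' i
    have h0 : IndepFun (Sum.elim ε' ε'' a) (Sum.elim ε' ε'' b) P :=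
      herr_indep.indepFun hab
    set φ : ℕ ⊕ ℕ → ℝ → ℝ := Sum.elim (fun _ x => -x) (fun _ => id) with hφ
    have hφm : ∀ j, Measurable (φ j) := by
      intro j
      cases j with
      | inl i => exact measurable_neg
      | inr i => exact measurable_id
    have h1 := h0.comp (hφm a) (hφm b)
    have hWφ : ∀ j, W j = φ j ∘ Sum.elim ε' ε'' j := by
      intro j
      cases j with
      | inl i => rfl
      | inr i => rfl
    rw [hWφ a, hWφ b]
    exact h1
  -- ### Step 6: moments of the noise sum
  have hSfun : ∀ n : ℕ, S n = ∑ j ∈ (range ⌊(n : ℝ) * (1 - p) / 2⌋₊).disjSum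
      (range ⌊(n : ℝ) * (1 - p) / 2⌋₊), W j := by
    intro n
    funext ω
    simp only [hS, Finset.sum_apply]
    rw [Finset.sum_disjSum]
    simp only [hW, Sum.elim_inl, Sum.elim_inr]
    rw [Finset.sum_sub_distrib, Finset.sum_neg_distrib]
    ring
  have hSmem : ∀ n, MemLp (S n) 2 P := by
    intro n
    rw [hSfun n]
    exact memLp_finsetSum' _ (fun j _ => hWmem j)
  have hSint : ∀ n, ∫ ω, S n ω ∂P = 0 := by
    intro n
    simp only [hS]
    rw [integral_finset_sum (μ := P) (f := fun i ω => ε'' i ω - ε' i ω) _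
      (fun i _ => ((hL'' i).integrable one_le_two).sub ((hL' i).integrable one_le_two))]
    refine Finset.sum_eq_zero fun i _ => ?_
    rw [integral_sub ((hL'' i).integrable one_le_two) ((hL' i).integrable one_le_two),
      hE' i, hE'' i]
    ring
  have hSvar : ∀ n : ℕ, variance (S n) P = 2 * (⌊(n : ℝ) * (1 - p) / 2⌋₊ : ℝ) * σ ^ 2 := by
    intro n
    rw [hSfun n]
    rw [IndepFun.variance_sum (fun j _ => hWmem j)
      (fun a _ b _ hab => hWindep a b hab)]
    rw [Finset.sum_disjSum]
    simp only [hWvar, Finset.sum_const, card_range, nsmul_eq_mul]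
    ring
  -- ### Step 7: Chebyshev for the noise term
  have hXint : ∀ n, ∫ ω, c n * S n ω ∂P = 0 := by
    intro n
    rw [integral_const_mul, hSint n, mul_zero]
  have hXvar : ∀ n, variance (fun ω => c n * S n ω) P =
      c n ^ 2 * (2 * (⌊(n : ℝ) * (1 - p) / 2⌋₊ : ℝ) * σ ^ 2) := by
    intro n
    have h1 : (fun ω => c n * S n ω) = (c n) • (S n) := by
      funext ω; simp [smul_eq_mul]
    rw [h1, variance_smul, hSvar n]
  have hcheb : ∀ n, P {ω | ε / 2 ≤ |c n * S n ω|} ≤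
      ENNReal.ofReal (c n ^ 2 * (2 * (⌊(n : ℝ) * (1 - p) / 2⌋₊ : ℝ) * σ ^ 2) / (ε / 2) ^ 2) := by
    intro n
    have h1 := meas_ge_le_variance_div_sq (μ := P) ((hSmem n).const_mul (c n)) (half_pos hε)
    rw [hXvar n] at h1
    have h2 : ∫ ω, (fun ω => c n * S n ω) ω ∂P = 0 := hXint n
    simpa [h2, sub_zero] using h1
  -- ### Step 8: the variance bound tends to 0
  have hVtend : Tendsto (fun n : ℕ =>
      c n ^ 2 * (2 * (⌊(n : ℝ) * (1 - p) / 2⌋₊ : ℝ) * σ ^ 2)) atTop (𝓝 0) := by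
    set C : ℝ := 2 * σ ^ 2 * p ^ (2 * γ) / (K ^ 2 * (1 - p)) with hC
    have hCtend : Tendsto (fun n : ℕ => C * (n : ℝ) ^ (2 * γ - 1)) atTop (𝓝 0) := by
      have h1 : Tendsto (fun x : ℝ => x ^ (2 * γ - 1)) atTop (𝓝 0) := by
        have := tendsto_rpow_neg_atTop (y := 1 - 2 * γ) (by linarith)
        simpa [show -(1 - 2 * γ) = 2 * γ - 1 by ring] using this
      have h2 := (h1.comp (tendsto_natCast_atTop_atTop (R := ℝ))).const_mul C
      simpa using h2
    have hbnd : ∀ᶠ n : ℕ in atTop,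
        c n ^ 2 * (2 * (⌊(n : ℝ) * (1 - p) / 2⌋₊ : ℝ) * σ ^ 2) ≤ C * (n : ℝ) ^ (2 * γ - 1) := by
      have hev1 : ∀ᶠ n : ℕ in atTop, 1 ≤ ⌊(n : ℝ) * p⌋₊ := hN1top.eventually_ge_atTop 1
      have hev2 : ∀ᶠ n : ℕ in atTop, (4 / (1 - p) : ℝ) ≤ (n : ℝ) :=
        tendsto_natCast_atTop_atTop.eventually_ge_atTop _
      have hev3 : ∀ᶠ n : ℕ in atTop, (1 : ℝ) ≤ (n : ℝ) :=
        tendsto_natCast_atTop_atTop.eventually_ge_atTop _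
      filter_upwards [hev1, hev2, hev3] with n h1 h2 h3
      have hn0 : (0 : ℝ) < (n : ℝ) := by linarith
      set a : ℝ := (⌊(n : ℝ) * p⌋₊ : ℝ) with ha
      set b : ℝ := (⌊(n : ℝ) * (1 - p) / 2⌋₊ : ℝ) with hb
      have hapos : (0 : ℝ) < a := by
        rw [ha]; exact_mod_cast Nat.lt_of_lt_of_le Nat.zero_lt_one h1
      have hbge : (n : ℝ) * (1 - p) / 4 ≤ b := by
        have hfl : (n : ℝ) * (1 - p) / 2 - 1 < b := by
          rw [hb]; exact Nat.sub_one_lt_floor _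
        have : (1 : ℝ) ≤ (n : ℝ) * (1 - p) / 4 := by
          rw [div_le_iff₀ hp1'] at h2
          linarith
        linarith
      have hbpos : (0 : ℝ) < b := by
        have : (0 : ℝ) < (n : ℝ) * (1 - p) / 4 := by positivity
        linarith
      have hane : a ^ (-γ) ≠ 0 := (Real.rpow_pos_of_pos hapos _).ne'
      have hgg : a ^ (-γ) * a ^ (-γ) * a ^ (2 * γ) = 1 := by
        rw [← Real.rpow_add hapos, ← Real.rpow_add hapos,
          show -γ + -γ + 2 * γ = 0 by ring, Real.rpow_zero]
      have hbne : b ≠ 0 := hbpos.ne'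
      have hcn : c n = (2 * K * a ^ (-γ) * b)⁻¹ := by
        simp only [hc, ← ha, ← hb]
      have heq1 : c n ^ 2 * (2 * b * σ ^ 2) = σ ^ 2 * a ^ (2 * γ) / (2 * K ^ 2 * b) := by
        rw [hcn, eq_div_iff (by positivity)]
        field_simp
        linear_combination (-1 : ℝ) * hgg
      have haub : a ≤ (n : ℝ) * p := by
        rw [ha]; exact Nat.floor_le (by positivity)
      have hstep2 : σ ^ 2 * a ^ (2 * γ) / (2 * K ^ 2 * b) ≤
          σ ^ 2 * ((n : ℝ) * p) ^ (2 * γ) / (2 * K ^ 2 * ((n : ℝ) * (1 - p) / 4)) := by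
        gcongr
        all_goals first
          | positivity
          | exact hapos.le
          | exact haub
          | exact hbge
      have hstep3 : σ ^ 2 * ((n : ℝ) * p) ^ (2 * γ) / (2 * K ^ 2 * ((n : ℝ) * (1 - p) / 4)) =
          C * (n : ℝ) ^ (2 * γ - 1) := by
        rw [Real.mul_rpow hn0.le hp0.le, Real.rpow_sub hn0, Real.rpow_one, hC]
        field_simp
        ring
      rw [heq1]
      rw [← hstep3]
      exact hstep2
    have hnonneg : ∀ n : ℕ, (0 : ℝ) ≤ c n ^ 2 * (2 * (⌊(n : ℝ) * (1 - p) / 2⌋₊ : ℝ) * σ ^ 2) := by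
      intro n; positivity
    exact tendsto_of_tendsto_of_tendsto_of_le_of_le' tendsto_const_nhds hCtend
      (Eventually.of_forall hnonneg) hbnd
  -- ### Step 9: the noise term goes to 0 in probability
  have hPB : Tendsto (fun n => P {ω | ε / 2 ≤ |c n * S n ω|}) atTop (𝓝 0) := by
    have h1 : Tendsto (fun n : ℕ => ENNReal.ofReal
        (c n ^ 2 * (2 * (⌊(n : ℝ) * (1 - p) / 2⌋₊ : ℝ) * σ ^ 2) / (ε / 2) ^ 2)) atTop (𝓝 0) := by
      have h2 := (hVtend.div_const ((ε / 2) ^ 2))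
      rw [zero_div] at h2
      have h3 := (ENNReal.continuous_ofReal.tendsto 0).comp h2
      rw [ENNReal.ofReal_zero] at h3
      exact h3
    exact tendsto_of_tendsto_of_tendsto_of_le_of_le tendsto_const_nhds h1
      (fun n => zero_le) (fun n => hcheb n)
  -- ### Step 10: eventual set inclusion
  have hhtend : Tendsto (fun n : ℕ => K * (⌊(n : ℝ) * p⌋₊ : ℝ) ^ (-γ)) atTop (𝓝 0) := by
    have h1 : Tendsto (fun x : ℝ => x ^ (-γ)) atTop (𝓝 0) := tendsto_rpow_neg_atTop hγ0
    have h2 := (h1.comp hN1rtop).const_mul K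
    simpa using h2
  have hev_main : ∀ᶠ n : ℕ in atTop,
      P {ω | ε ≤ dist
        ((2 * K * ((⌊(n : ℝ) * p⌋₊ : ℝ) ^ (-γ)) * (⌊(n : ℝ) * (1 - p) / 2⌋₊ : ℝ))⁻¹ *
          ∑ i ∈ range ⌊(n : ℝ) * (1 - p) / 2⌋₊,
            ((f (d n ω + K * (⌊(n : ℝ) * p⌋₊ : ℝ) ^ (-γ)) + ε'' i ω)
              - (f (d n ω - K * (⌊(n : ℝ) * p⌋₊ : ℝ) ^ (-γ)) + ε' i ω))) (deriv f d₀)}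
        ≤ P {ω | δ < |d n ω - d₀|} + P {ω | ε / 2 ≤ |c n * S n ω|} := by
    have hev1 : ∀ᶠ n : ℕ in atTop, 1 ≤ ⌊(n : ℝ) * p⌋₊ := hN1top.eventually_ge_atTop 1
    have hev2 : ∀ᶠ n : ℕ in atTop, 1 ≤ ⌊(n : ℝ) * (1 - p) / 2⌋₊ :=
      (tendsto_nat_floor_atTop.comp
        ((tendsto_natCast_atTop_atTop.atTop_mul_const hp1').atTop_div_const
          (by norm_num : (0:ℝ) < 2))).eventually_ge_atTop 1
    have hev3 : ∀ᶠ n : ℕ in atTop, K * (⌊(n : ℝ) * p⌋₊ : ℝ) ^ (-γ) ≤ δ := by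
      filter_upwards [hhtend.eventually (gt_mem_nhds hδpos)] with n hn using hn.le
    filter_upwards [hev1, hev2, hev3] with n h1 h2 h3
    refine le_trans (measure_mono ?_) (measure_union_le _ _)
    intro ω hω
    simp only [Set.mem_setOf_eq] at hω
    by_contra hcon
    simp only [Set.mem_union, Set.mem_setOf_eq, not_or, not_lt, not_le] at hcon
    obtain ⟨hcd, hcB⟩ := hcon
    -- abbreviations
    set h' : ℝ := K * (⌊(n : ℝ) * p⌋₊ : ℝ) ^ (-γ) with hh'def
    have hN1pos : (0 : ℝ) < (⌊(n : ℝ) * p⌋₊ : ℝ) := by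
      exact_mod_cast Nat.lt_of_lt_of_le Nat.zero_lt_one h1
    have hh'pos : 0 < h' := by
      rw [hh'def]; positivity
    have hN2pos : (0 : ℝ) < (⌊(n : ℝ) * (1 - p) / 2⌋₊ : ℝ) := by
      exact_mod_cast Nat.lt_of_lt_of_le Nat.zero_lt_one h2
    -- decompose the estimator
    have hsum2 : ∑ i ∈ range ⌊(n : ℝ) * (1 - p) / 2⌋₊,
        ((f (d n ω + h') + ε'' i ω) - (f (d n ω - h') + ε' i ω)) =
        (⌊(n : ℝ) * (1 - p) / 2⌋₊ : ℝ) * (f (d n ω + h') - f (d n ω - h')) + S n ω := by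
      simp only [hS]
      rw [Finset.sum_congr rfl (fun i _ => show
        (f (d n ω + h') + ε'' i ω) - (f (d n ω - h') + ε' i ω) =
        (f (d n ω + h') - f (d n ω - h')) + (ε'' i ω - ε' i ω) from by ring)]
      rw [Finset.sum_add_distrib, Finset.sum_const, card_range, nsmul_eq_mul]
    have hane : (0:ℝ) < (⌊(n : ℝ) * p⌋₊ : ℝ) ^ (-γ) := Real.rpow_pos_of_pos hN1pos _
    have hane' : ((⌊(n : ℝ) * p⌋₊ : ℝ) ^ (-γ)) ≠ 0 := hane.ne'
    have hN2ne : (⌊(n : ℝ) * (1 - p) / 2⌋₊ : ℝ) ≠ 0 := hN2pos.ne'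
    have hcm : c n * (⌊(n : ℝ) * (1 - p) / 2⌋₊ : ℝ) = (2 * h')⁻¹ := by
      simp only [hc, hh'def]
      field_simp
    have hdecomp : c n * ∑ i ∈ range ⌊(n : ℝ) * (1 - p) / 2⌋₊,
          ((f (d n ω + h') + ε'' i ω) - (f (d n ω - h') + ε' i ω)) =
        (2 * h')⁻¹ * (f (d n ω + h') - f (d n ω - h')) + c n * S n ω := by
      rw [hsum2, mul_add, ← mul_assoc, hcm]
    have hω2 : ε ≤ |c n * ∑ i ∈ range ⌊(n : ℝ) * (1 - p) / 2⌋₊,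
        ((f (d n ω + h') + ε'' i ω) - (f (d n ω - h') + ε' i ω)) - deriv f d₀| := by
      rw [Real.dist_eq] at hω
      exact hω
    rw [hdecomp] at hω2
    replace hω := hω2
    have hA := hslope (d n ω) h' hh'pos h3 hcd
    have htri : |(2 * h')⁻¹ * (f (d n ω + h') - f (d n ω - h')) + c n * S n ω - deriv f d₀| ≤
        |(2 * h')⁻¹ * (f (d n ω + h') - f (d n ω - h')) - deriv f d₀| + |c n * S n ω| := by
      have : (2 * h')⁻¹ * (f (d n ω + h') - f (d n ω - h')) + c n * S n ω - deriv f d₀ =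
          ((2 * h')⁻¹ * (f (d n ω + h') - f (d n ω - h')) - deriv f d₀) + c n * S n ω := by ring
      rw [this]
      exact abs_add_le _ _
    have : ε ≤ ε / 4 + ε / 2 := le_trans hω (le_trans htri (by linarith))
    linarith
  -- ### Step 11: conclusion
  have hsum0 : Tendsto (fun n => P {ω | δ < |d n ω - d₀|} +
      P {ω | ε / 2 ≤ |c n * S n ω|}) atTop (𝓝 0) := by
    have := hPd.add hPB
    simpa using this
  exact tendsto_of_tendsto_of_tendsto_of_le_of_le' tendsto_const_nhds hsum0
    (Eventually.of_forall fun n => zero_le) hev_main
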